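/- For every t ≥ 4, there exists a balanced t-coloring of C_t^2 with no rainbow geometric line; equivalently, a t×t array over t symbols, each symbol used exactly t times, such that every row, every column, and each of the two main diagonals contains fewer than t distinct symbols. -/

import Mathlib

private lemma image_card_lt' {m : ℕ} (v : Fin m → Fin m) {a b : Fin m}
    (hab : a ≠ b) (h : v a = v b) : (Finset.univ.image v).card < m := by
  have h1 : (Finset.univ.image v).card ≤ m := by
    simpa using Finset.card_image_le (s := (Finset.univ : Finset (Fin m))) (f := v)
  rcases lt_or_eq_of_le h1 with h2 | h2
  · exact h2
  · exfalso
    have hinj : Set.InjOn v (Finset.univ : Finset (Fin m)) :=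
      Finset.injOn_of_card_image_eq (by simpa using h2)
    exact hab (hinj (by simp) (by simp) h)

open Fin.NatCast Fin.CommRing in
private lemma stmt9_general (n : ℕ) (hn : 6 ≤ n) :
    ∃ f : Fin (n+1) → Fin (n+1) → Fin (n+1),
      (∀ c : Fin (n+1),
        (Finset.univ.filter (fun p : Fin (n+1) × Fin (n+1) => f p.1 p.2 = c)).card = n+1) ∧
      (∀ i : Fin (n+1), (Finset.univ.image (fun j => f i j)).card < n+1) ∧
      (∀ j : Fin (n+1), (Finset.univ.image (fun i => f i j)).card < n+1) ∧
      (Finset.univ.image (fun i => f i i)).card < n+1 ∧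
      (Finset.univ.image (fun i : Fin (n+1) => f i i.rev)).card < n+1 := by
  haveI : NeZero (n+1) := ⟨n.succ_ne_zero⟩
  set g : Fin (n+1) → Fin (n+1) := fun e => if e = 2 ∨ e = 5 then 1 else 0 with hg
  set f : Fin (n+1) → Fin (n+1) → Fin (n+1) := fun i j => i + g (j - 2*i) with hf
  -- numeral disequalities
  have hne : ∀ a b : ℕ, a < n+1 → b < n+1 → a ≠ b →
      (a : Fin (n+1)) ≠ (b : Fin (n+1)) := by
    intro a b ha hb hab h
    exact hab (by rw [← Fin.val_cast_of_lt ha, ← Fin.val_cast_of_lt hb, h])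
  have e0 : ((0:ℕ) : Fin (n+1)) = 0 := by norm_cast
  have e1 : ((1:ℕ) : Fin (n+1)) = 1 := by norm_cast
  have e2 : ((2:ℕ) : Fin (n+1)) = 2 := by norm_cast
  have e3 : ((3:ℕ) : Fin (n+1)) = 3 := by norm_cast
  have e5 : ((5:ℕ) : Fin (n+1)) = 5 := by norm_cast
  have en : ((n:ℕ) : Fin (n+1)) = -1 := by
    have h := Fin.natCast_self (n+1)
    push_cast at h
    linear_combination h
  have g2 : g 2 = 1 := by simp [hg]
  have g5 : g 5 = 1 := by simp [hg]
  have gz : ∀ a : ℕ, a < n+1 → a ≠ 2 → a ≠ 5 → g a = 0 := by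
    intro a ha h2 h5
    have : ¬((a : Fin (n+1)) = 2 ∨ (a : Fin (n+1)) = 5) := by
      rintro (h | h)
      · exact hne a 2 ha (by omega) h2 (by rw [h, e2])
      · exact hne a 5 ha (by omega) h5 (by rw [h, e5])
    simp only [hg]
    exact if_neg this
  have g0 : g 0 = 0 := by rw [← e0]; exact gz 0 (by omega) (by omega) (by omega)
  have g1 : g 1 = 0 := by rw [← e1]; exact gz 1 (by omega) (by omega) (by omega)
  have g3 : g 3 = 0 := by rw [← e3]; exact gz 3 (by omega) (by omega) (by omega)
  have gm1 : g (-1) = 0 := by rw [← en]; exact gz n (by omega) (by omega) (by omega)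
  have h10 : (1 : Fin (n+1)) ≠ 0 := by
    rw [← e1, ← e0]; exact hne 1 0 (by omega) (by omega) (by omega)
  have h30 : (3 : Fin (n+1)) ≠ 0 := by
    rw [← e3, ← e0]; exact hne 3 0 (by omega) (by omega) (by omega)
  have h21 : (2 : Fin (n+1)) ≠ 1 := by
    rw [← e2, ← e1]; exact hne 2 1 (by omega) (by omega) (by omega)
  refine ⟨f, ?_, ?_, ?_, ?_, ?_⟩
  · -- balance
    set N : Fin (n+1) → ℕ :=
      fun c => (Finset.univ.filter (fun p : Fin (n+1) × Fin (n+1) => f p.1 p.2 = c)).card with hN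
    show ∀ c, N c = n+1
    have shift : ∀ a b : Fin (n+1), f (a+1) (b+2) = f a b + 1 := by
      intro a b
      have h : b + 2 - 2*(a+1) = b - 2*a := by ring
      simp only [hf, h]; ring
    have step : ∀ d : Fin (n+1), N (d+1) = N d := by
      intro d
      refine Finset.card_bij' (fun p _ => ((p.1 - 1, p.2 - 2) : Fin (n+1) × Fin (n+1)))
        (fun p _ => ((p.1 + 1, p.2 + 2) : Fin (n+1) × Fin (n+1))) ?_ ?_ ?_ ?_
      · intro p hp
        simp only [Finset.mem_filter, Finset.mem_univ, true_and] at hp ⊢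
        have h := shift (p.1 - 1) (p.2 - 2)
        have e1' : p.1 - 1 + 1 = p.1 := by ring
        have e2' : p.2 - 2 + 2 = p.2 := by ring
        rw [e1', e2'] at h
        linear_combination hp - h
      · intro p hp
        simp only [Finset.mem_filter, Finset.mem_univ, true_and] at hp ⊢
        rw [shift, hp]
      · intro p hp
        exact Prod.ext (by ring) (by ring)
      · intro p hp
        exact Prod.ext (by ring) (by ring)
    have key : ∀ k : ℕ, N ((k : ℕ) : Fin (n+1)) = N 0 := by
      intro k
      induction k with
      | zero => norm_num
      | succ m ih =>
        have h : ((m+1 : ℕ) : Fin (n+1)) = ((m : ℕ) : Fin (n+1)) + 1 := by push_cast; ring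
        rw [h, step, ih]
    have hall : ∀ d : Fin (n+1), N d = N 0 := by
      intro d
      have h := key d.val
      rwa [Fin.cast_val_eq_self] at h
    have total : (n+1) * (n+1) = ∑ d : Fin (n+1), N d := by
      have h := Finset.card_eq_sum_card_fiberwise
        (s := (Finset.univ : Finset (Fin (n+1) × Fin (n+1))))
        (t := (Finset.univ : Finset (Fin (n+1))))
        (f := fun p => f p.1 p.2) (fun x _ => Finset.mem_univ _)
      simpa [hN] using h
    have hsum : ∑ d : Fin (n+1), N d = (n+1) * N 0 := by
      rw [Finset.sum_congr rfl (fun d _ => hall d), Finset.sum_const]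
      simp [mul_comm]
    have hN0 : N 0 = n+1 := by
      have := total.trans hsum
      exact (Nat.eq_of_mul_eq_mul_left (by omega) this.symm)
    intro c
    rw [hall c, hN0]
  · -- rows
    intro i
    apply image_card_lt' _ (a := 2*i) (b := 2*i + 3)
    · intro h
      exact h30 (by linear_combination -h)
    · show f i (2*i) = f i (2*i+3)
      have a1 : 2*i - 2*i = 0 := by ring
      have a2 : 2*i + 3 - 2*i = 3 := by ring
      simp only [hf, a1, a2, g0, g3]
  · -- columns
    intro j
    have hdouble : ∃ i : Fin (n+1), 2*i = j - 2 ∨ 2*i = j - 2 - 3 := by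
      set x : Fin (n+1) := j - 2 with hx
      rcases Nat.even_or_odd x.val with he | ho
      · obtain ⟨k, hk⟩ := he
        refine ⟨((x.val/2 : ℕ) : Fin (n+1)), Or.inl ?_⟩
        have h2 : (2 * (x.val/2) : ℕ) = x.val := by omega
        calc 2*((x.val/2 : ℕ) : Fin (n+1)) = ((2*(x.val/2) : ℕ) : Fin (n+1)) := by push_cast; ring
        _ = ((x.val : ℕ) : Fin (n+1)) := by rw [h2]
        _ = x := Fin.cast_val_eq_self x
      · obtain ⟨k, hk⟩ := ho
        rcases Nat.even_or_odd n with hne' | hno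
        · obtain ⟨l, hl⟩ := hne'
          refine ⟨(((x.val + n + 1)/2 : ℕ) : Fin (n+1)), Or.inl ?_⟩
          have h2 : (2 * ((x.val + n + 1)/2) : ℕ) = x.val + (n+1) := by omega
          calc 2*(((x.val + n + 1)/2 : ℕ) : Fin (n+1))
              = ((2*((x.val + n + 1)/2) : ℕ) : Fin (n+1)) := by push_cast; ring
          _ = ((x.val + (n+1) : ℕ) : Fin (n+1)) := by rw [h2]
          _ = x := by push_cast [Fin.cast_val_eq_self]; rw [en]; ring
        · obtain ⟨l, hl⟩ := hno
          refine ⟨(((x.val + n - 2)/2 : ℕ) : Fin (n+1)), Or.inr ?_⟩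
          have h2 : (2 * ((x.val + n - 2)/2) : ℕ) = x.val + n - 2 := by omega
          have h3 : (x.val + n - 2 : ℕ) = x.val + (n - 2) := by omega
          calc 2*(((x.val + n - 2)/2 : ℕ) : Fin (n+1))
              = ((2*((x.val + n - 2)/2) : ℕ) : Fin (n+1)) := by push_cast; ring
          _ = ((x.val + (n - 2) : ℕ) : Fin (n+1)) := by rw [h2, h3]
          _ = x + ((n:ℕ) : Fin (n+1)) - 2 := by
                rw [Nat.cast_add, Nat.cast_sub (by omega : 2 ≤ n), Fin.cast_val_eq_self]
                push_cast; ring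
          _ = x - 3 := by rw [en]; ring
    obtain ⟨i, hi | hi⟩ := hdouble
    · apply image_card_lt' _ (a := i) (b := i + 1)
      · intro h; exact h10 (by linear_combination -h)
      · show f i j = f (i+1) j
        have a1 : j - 2*i = 2 := by linear_combination -hi
        have a2 : j - 2*(i+1) = 0 := by linear_combination -hi
        simp only [hf, a1, a2, g2, g0]; ring
    · apply image_card_lt' _ (a := i) (b := i + 1)
      · intro h; exact h10 (by linear_combination -h)
      · show f i j = f (i+1) j
        have a1 : j - 2*i = 5 := by linear_combination -hi
        have a2 : j - 2*(i+1) = 3 := by linear_combination -hi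
        simp only [hf, a1, a2, g5, g3]; ring
  · -- main diagonal
    apply image_card_lt' _ (a := (-2 : Fin (n+1))) (b := (-1 : Fin (n+1)))
    · intro h; exact h21 (by linear_combination -h)
    · show f (-2) (-2) = f (-1) (-1)
      have a1 : (-2 : Fin (n+1)) - 2*(-2) = 2 := by ring
      have a2 : (-1 : Fin (n+1)) - 2*(-1) = 1 := by ring
      simp only [hf, a1, a2, g2, g1]; ring
  · -- anti-diagonal
    have hrev : ∀ i : Fin (n+1), i.rev = -1 - i := by
      intro i
      have h1 : i.rev = ((n - i.val : ℕ) : Fin (n+1)) := by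
        apply Fin.ext
        rw [Fin.val_cast_of_lt (by omega : n - i.val < n+1)]
        simp [Fin.val_rev]
      rw [h1, Nat.cast_sub (by omega : i.val ≤ n), Fin.cast_val_eq_self, en]
    apply image_card_lt' _ (a := (0 : Fin (n+1))) (b := (-1 : Fin (n+1)))
    · intro h; exact h10 (by linear_combination h)
    · show f 0 (Fin.rev 0) = f (-1) (Fin.rev (-1))
      rw [hrev 0, hrev (-1)]
      have a1 : (-1 : Fin (n+1)) - 0 - 2*0 = -1 := by ring
      have a2 : (-1 : Fin (n+1)) - (-1) - 2*(-1) = 2 := by ring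
      simp only [hf, a1, a2, gm1, g2]; ring


/-- For every `t ≥ 4` there is a balanced `t`-coloring of `C_t^2` with no
rainbow geometric line: a `t×t` array over `t` symbols, each symbol used
exactly `t` times, such that every row, every column, and each of the two main
diagonals contains fewer than `t` distinct symbols. -/
theorem stmt9 (t : ℕ) (ht : 4 ≤ t) :
    ∃ f : Fin t → Fin t → Fin t,
      (∀ c : Fin t,
        (Finset.univ.filter (fun p : Fin t × Fin t => f p.1 p.2 = c)).card = t) ∧
      (∀ i : Fin t, (Finset.univ.image (fun j => f i j)).card < t) ∧
      (∀ j : Fin t, (Finset.univ.image (fun i => f i j)).card < t) ∧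
      (Finset.univ.image (fun i => f i i)).card < t ∧
      (Finset.univ.image (fun i : Fin t => f i i.rev)).card < t := by
  rcases Nat.lt_or_ge t 7 with h7 | h7
  · interval_cases t
    · exact ⟨![![0,0,1,1],![0,0,1,1],![2,2,3,3],![2,2,3,3]],
        by decide, by decide, by decide, by decide, by decide⟩
    · exact ⟨![![0,0,1,0,0],![1,1,1,1,2],![2,3,2,2,2],![3,3,3,4,3],![0,4,4,4,4]],
        by decide, by decide, by decide, by decide, by decide⟩
    · exact ⟨![![0,0,1,1,0,0],![1,1,1,1,2,2],![3,3,2,2,2,2],![3,3,4,4,3,3],![4,4,4,4,5,5],![0,0,5,5,5,5]],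
        by decide, by decide, by decide, by decide, by decide⟩
  · obtain ⟨n, rfl⟩ : ∃ n, t = n+1 := ⟨t-1, by omega⟩
    exact stmt9_general n (by omega)
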